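/- Let θ₀ > 0, β* > 0, γ > 0 and set Θ = θ₀ e^{γ/2}. If (γ/2)·β*·Θ·(1 + Θ) < 1, then there is exactly one z > 0 satisfying z = 1 + β* θ(z) tanh(θ(z)), where θ(z) = θ₀ exp((γ/2)(1 − 1/z)). -/

import Mathlib

open Real

private lemma tanh_eq' (x : ℝ) : Real.tanh x = Real.sinh x / Real.cosh x :=
  Real.tanh_eq_sinh_div_cosh x

private lemma hasDerivAt_tanh' (x : ℝ) :
    HasDerivAt Real.tanh (1 / Real.cosh x ^ 2) x := by
  have h : HasDerivAt (fun y => Real.sinh y / Real.cosh y)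
      ((Real.cosh x * Real.cosh x - Real.sinh x * Real.sinh x) / Real.cosh x ^ 2) x :=
    (Real.hasDerivAt_sinh x).div (Real.hasDerivAt_cosh x) (Real.cosh_pos x).ne'
  have : (Real.cosh x * Real.cosh x - Real.sinh x * Real.sinh x) = 1 := by
    have := Real.cosh_sq_sub_sinh_sq x; nlinarith
  rw [this] at h
  exact h.congr_of_eventuallyEq (Filter.Eventually.of_forall fun y => tanh_eq' y)

private lemma tanh_nonneg' {x : ℝ} (hx : 0 ≤ x) : 0 ≤ Real.tanh x := by
  rw [tanh_eq']
  exact div_nonneg (Real.sinh_nonneg_iff.2 hx) (Real.cosh_pos x).le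

private lemma tanh_pos' {x : ℝ} (hx : 0 < x) : 0 < Real.tanh x := by
  rw [tanh_eq']
  exact div_pos (Real.sinh_pos_iff.2 hx) (Real.cosh_pos x)

private lemma tanh_le_one' (x : ℝ) : Real.tanh x ≤ 1 := by
  rw [tanh_eq', div_le_one (Real.cosh_pos x)]
  exact (Real.sinh_lt_cosh x).le

/-- Uniqueness of the steady state under a smallness condition: with
`Θ = θ₀ e^{γ/2}`, if `(γ/2)·β*·Θ·(1 + Θ) < 1` then there is exactly one `z > 0`
satisfying `z = 1 + β* θ(z) tanh(θ(z))`, `θ(z) = θ₀ exp((γ/2)(1 − 1/z))`. -/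
theorem stmt_12 (θ₀ βstar γ : ℝ) (hθ₀ : 0 < θ₀) (hβ : 0 < βstar) (hγ : 0 < γ)
    (hsmall : (γ / 2) * βstar * (θ₀ * Real.exp (γ / 2)) *
        (1 + θ₀ * Real.exp (γ / 2)) < 1) :
    ∃! z : ℝ, 0 < z ∧
      z = 1 + βstar * (θ₀ * Real.exp ((γ / 2) * (1 - 1 / z))) *
            Real.tanh (θ₀ * Real.exp ((γ / 2) * (1 - 1 / z))) := by
  set Θ : ℝ := θ₀ * Real.exp (γ / 2) with hΘdef
  have hΘpos : 0 < Θ := mul_pos hθ₀ (Real.exp_pos _)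
  set th : ℝ → ℝ := fun z => θ₀ * Real.exp ((γ / 2) * (1 - 1 / z)) with hthdef
  set h : ℝ → ℝ := fun z => z - (1 + βstar * th z * Real.tanh (th z)) with hhdef
  -- basic facts about θ on [1, ∞)
  have hthpos : ∀ z : ℝ, 0 < th z := fun z => mul_pos hθ₀ (Real.exp_pos _)
  have hthle : ∀ z : ℝ, 1 ≤ z → th z ≤ Θ := by
    intro z hz
    have hz0 : 0 < z := lt_of_lt_of_le one_pos hz
    apply mul_le_mul_of_nonneg_left _ hθ₀.le
    apply Real.exp_le_exp.2
    have : 0 < 1 / z := by positivity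
    nlinarith [le_of_lt hγ]
  -- derivative of θ
  have hthderiv : ∀ z : ℝ, 0 < z →
      HasDerivAt th (th z * ((γ / 2) / z ^ 2)) z := by
    intro z hz
    have h1 : HasDerivAt (fun y : ℝ => 1 / y) (-(z ^ 2)⁻¹) z := by
      simpa [one_div] using hasDerivAt_inv hz.ne'
    have h2 : HasDerivAt (fun y : ℝ => (γ / 2) * (1 - 1 / y))
        ((γ / 2) * (z ^ 2)⁻¹) z := by
      have := ((hasDerivAt_const z (1:ℝ)).sub h1).const_mul (γ / 2)
      simpa using this
    have h3 := (Real.hasDerivAt_exp _).comp z h2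
    have h4 := h3.const_mul θ₀
    refine h4.congr_deriv ?_
    simp only [hthdef]
    ring
  -- derivative of h
  have hhderiv : ∀ z : ℝ, 0 < z →
      HasDerivAt h (1 - βstar * (th z * ((γ / 2) / z ^ 2)) *
        (Real.tanh (th z) + th z * (1 / Real.cosh (th z) ^ 2))) z := by
    intro z hz
    have hth := hthderiv z hz
    have htanh := (hasDerivAt_tanh' (th z)).comp z hth
    have hprod : HasDerivAt (fun y => βstar * th y * Real.tanh (th y))
        (βstar * (th z * ((γ / 2) / z ^ 2)) * Real.tanh (th z) +
         βstar * th z * (1 / Real.cosh (th z) ^ 2 * (th z * ((γ / 2) / z ^ 2)))) z := by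
      exact ((hth.const_mul βstar).mul htanh)
    have := ((hasDerivAt_id z).sub ((hasDerivAt_const z (1:ℝ)).add hprod))
    refine this.congr_deriv ?_
    ring
  -- positivity of the derivative on Ioi 1
  have hderivpos : ∀ z : ℝ, 1 < z →
      0 < 1 - βstar * (th z * ((γ / 2) / z ^ 2)) *
        (Real.tanh (th z) + th z * (1 / Real.cosh (th z) ^ 2)) := by
    intro z hz
    have hz0 : (0:ℝ) < z := lt_trans one_pos hz
    have h1 : th z ≤ Θ := hthle z hz.le
    have h2 : (γ / 2) / z ^ 2 ≤ γ / 2 := by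
      apply div_le_self (by positivity)
      nlinarith
    have h3 : Real.tanh (th z) ≤ 1 := tanh_le_one' _
    have h4 : 1 / Real.cosh (th z) ^ 2 ≤ 1 := by
      rw [div_le_one (by positivity)]
      nlinarith [Real.one_le_cosh (th z)]
    have h5 : th z * (1 / Real.cosh (th z) ^ 2) ≤ Θ := by
      calc th z * (1 / Real.cosh (th z) ^ 2) ≤ th z * 1 :=
            mul_le_mul_of_nonneg_left h4 (hthpos z).le
        _ ≤ Θ := by linarith
    have h6 : Real.tanh (th z) + th z * (1 / Real.cosh (th z) ^ 2) ≤ 1 + Θ := by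
      linarith
    have h7 : 0 ≤ Real.tanh (th z) + th z * (1 / Real.cosh (th z) ^ 2) := by
      have := tanh_nonneg' (hthpos z).le
      have : 0 ≤ th z * (1 / Real.cosh (th z) ^ 2) := by positivity
      have := tanh_nonneg' (hthpos z).le
      linarith
    have h8 : th z * ((γ / 2) / z ^ 2) ≤ Θ * (γ / 2) := by
      have := mul_le_mul h1 h2 (by positivity) hΘpos.le
      linarith
    have key : βstar * (th z * ((γ / 2) / z ^ 2)) *
        (Real.tanh (th z) + th z * (1 / Real.cosh (th z) ^ 2)) ≤
        βstar * (Θ * (γ / 2)) * (1 + Θ) := by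
      apply mul_le_mul _ h6 h7 (by positivity)
      exact mul_le_mul_of_nonneg_left h8 hβ.le
    have : βstar * (Θ * (γ / 2)) * (1 + Θ) < 1 := by nlinarith
    linarith
  -- h is strictly monotone on Ici 1
  have hmono : StrictMonoOn h (Set.Ici 1) := by
    apply strictMonoOn_of_hasDerivWithinAt_pos (convex_Ici 1)
    · intro x hx
      have hx0 : (0:ℝ) < x := lt_of_lt_of_le one_pos hx
      exact (hhderiv x hx0).continuousAt.continuousWithinAt
    · intro x hx
      rw [interior_Ici] at hx
      exact (hhderiv x (lt_trans one_pos hx)).hasDerivWithinAt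
    · intro x hx
      rw [interior_Ici] at hx
      exact hderivpos x hx
  -- continuity of h on [1, M]
  have hcont : ContinuousOn h (Set.Icc 1 (2 + βstar * Θ)) := by
    intro x hx
    have hx0 : (0:ℝ) < x := lt_of_lt_of_le one_pos hx.1
    exact (hhderiv x hx0).continuousAt.continuousWithinAt
  -- endpoint values
  have hth1 : th 1 = θ₀ := by simp [hthdef]
  have hM : (1:ℝ) ≤ 2 + βstar * Θ := by nlinarith
  have hh1 : h 1 < 0 := by
    have := tanh_pos' (hθ₀.trans_eq hth1.symm)
    have hpos : 0 < βstar * th 1 * Real.tanh (th 1) :=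
      mul_pos (mul_pos hβ (hthpos 1)) this
    simp only [hhdef]
    linarith
  have hhM : 0 < h (2 + βstar * Θ) := by
    have h1 : th (2 + βstar * Θ) ≤ Θ := hthle _ hM
    have h2 : Real.tanh (th (2 + βstar * Θ)) ≤ 1 := tanh_le_one' _
    have h3 : βstar * th (2 + βstar * Θ) * Real.tanh (th (2 + βstar * Θ)) ≤ βstar * Θ := by
      calc βstar * th (2 + βstar * Θ) * Real.tanh (th (2 + βstar * Θ))
          ≤ βstar * th (2 + βstar * Θ) * 1 :=
            mul_le_mul_of_nonneg_left h2 (by positivity)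
        _ ≤ βstar * Θ := by nlinarith
    simp only [hhdef]
    linarith
  -- existence via IVT
  obtain ⟨c, hcmem, hc0⟩ : ∃ c ∈ Set.Icc (1:ℝ) (2 + βstar * Θ), h c = 0 := by
    have := intermediate_value_Icc hM hcont
    have h0mem : (0:ℝ) ∈ Set.Icc (h 1) (h (2 + βstar * Θ)) := ⟨hh1.le, hhM.le⟩
    obtain ⟨c, hc, hc'⟩ := this h0mem
    exact ⟨c, hc, hc'⟩
  have hc1 : (1:ℝ) ≤ c := hcmem.1
  have hcpos : 0 < c := lt_of_lt_of_le one_pos hc1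
  refine ⟨c, ⟨hcpos, ?_⟩, ?_⟩
  · have : c - (1 + βstar * th c * Real.tanh (th c)) = 0 := hc0
    simp only [hthdef] at this ⊢
    linarith
  · rintro y ⟨hy0, hyeq⟩
    have hyeq' : y = 1 + βstar * th y * Real.tanh (th y) := hyeq
    -- y ≥ 1
    have hy1 : 1 ≤ y := by
      have h1 : 0 < βstar * th y * Real.tanh (th y) :=
        mul_pos (mul_pos hβ (hthpos y)) (tanh_pos' (hthpos y))
      linarith [hyeq']
    have hyroot : h y = 0 := by
      simp only [hhdef]
      linarith [hyeq']
    exact hmono.injOn (Set.mem_Ici.2 hy1) (Set.mem_Ici.2 hc1) (by rw [hyroot, hc0])
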